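/- arXiv:2310.18124 — 8 statements merged into one kernel-verified Lean document; each statement's English description precedes it below -/
import Mathlib

section
/- Let F be a finitely generated group and let H be a subgroup of F of finite index. Then the set { φ(H) : φ ∈ Aut(F) } of images of H under all automorphisms of F is a finite set of subgroups of F. -/
open Subgroup

/-- Transport a permutation group along an equiv, as a monoid hom. -/
private def permHomAux {α β : Type*} (e : α ≃ β) : Equiv.Perm α →* Equiv.Perm β where
  toFun p := e.permCongr p
  map_one' := by ext x; simp
  map_mul' p q := by ext x; simp [Equiv.permCongr_apply, Equiv.Perm.mul_apply]

private lemma hom_finite_aux (F P : Type*) [Group F] [Group.FG F] [Group P] [Finite P] :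
    Finite (F →* P) := by
  obtain ⟨S, hS⟩ := Group.FG.out (G := F)
  have hinj : Function.Injective (fun f : F →* P => (fun s : (S : Set F) => f s)) := by
    intro f g h
    refine MonoidHom.eq_of_eqOn_dense hS ?_
    intro x hx
    exact congrFun h ⟨x, hx⟩
  exact Finite.of_injective _ hinj

private lemma finite_index_eq_aux (F : Type) [Group F] [Group.FG F] (n : ℕ) (hn : n ≠ 0) :
    {K : Subgroup F | K.index = n}.Finite := by
  rw [← Set.finite_coe_iff]
  have := hom_finite_aux F (Equiv.Perm (Fin n))
  have key : ∀ K : {K : Subgroup F | K.index = n}, Finite (F ⧸ (K : Subgroup F)) := fun K =>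
    Nat.finite_of_card_ne_zero (by
      rw [← Subgroup.index_eq_card, show (K : Subgroup F).index = n from K.2]; exact hn)
  let e : ∀ K : {K : Subgroup F | K.index = n}, F ⧸ (K : Subgroup F) ≃ Fin n := fun K =>
    have := key K
    Finite.equivFinOfCardEq (by rw [← Subgroup.index_eq_card]; exact K.2)
  let f : {K : Subgroup F | K.index = n} → (F →* Equiv.Perm (Fin n)) × Fin n := fun K =>
    ⟨(permHomAux (e K)).comp (MulAction.toPermHom F (F ⧸ (K : Subgroup F))),
      e K ((1 : F) : F ⧸ (K : Subgroup F))⟩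
  have hmem : ∀ (K : {K : Subgroup F | K.index = n}) (g : F),
      g ∈ (K : Subgroup F) ↔ (f K).1 g (f K).2 = (f K).2 := by
    intro K g
    simp only [f, MonoidHom.comp_apply, permHomAux, MonoidHom.coe_mk, OneHom.coe_mk,
      Equiv.permCongr_apply, Equiv.symm_apply_apply, MulAction.toPermHom_apply]
    rw [EmbeddingLike.apply_eq_iff_eq, MulAction.toPerm_apply,
      MulAction.Quotient.smul_mk, smul_eq_mul, mul_one, QuotientGroup.eq]
    simp
  have hinj : Function.Injective f := by
    intro K K' h
    apply Subtype.ext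
    ext g
    rw [show (g ∈ (K : Subgroup F)) ↔ _ from hmem K g, show (g ∈ (K' : Subgroup F)) ↔ _ from hmem K' g, h]
  exact Finite.of_injective f hinj

/-- If `F` is a finitely generated group and `H` is a finite-index subgroup of `F`,
then the set of images of `H` under all automorphisms of `F` is finite. -/
theorem stmt1 (F : Type) [Group F] [Group.FG F] (H : Subgroup F) [H.FiniteIndex] :
    {K : Subgroup F | ∃ φ : MulAut F, K = Subgroup.map φ.toMonoidHom H}.Finite := by
  have hn : H.index ≠ 0 := Subgroup.FiniteIndex.index_ne_zero
  refine (finite_index_eq_aux F H.index hn).subset ?_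
  rintro K ⟨φ, rfl⟩
  exact Subgroup.index_map_eq H φ.surjective
    (by rw [(MonoidHom.ker_eq_bot_iff _).mpr φ.injective]; exact bot_le)
end

section
/- Let F be a group and N1 a normal subgroup of F. Then the subgroup N defined as the intersection, over all φ ∈ Aut(F), of the images φ(N1), is a normal subgroup of F that is invariant under every automorphism of F (i.e., φ(N) = N for all φ ∈ Aut(F), so N is characteristic). If moreover F is finitely generated and N1 has finite index in F, then N has finite index in F. -/
lemma finite_homs (F P : Type) [Group F] [Group P] (hFG : Group.FG F) [Finite P] :
    Finite (F →* P) := by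
  obtain ⟨S, hS⟩ := hFG.1
  refine Finite.of_injective (fun f => fun s : S => f s) ?_
  intro f g h
  refine MonoidHom.eq_of_eqOn_dense hS ?_
  intro x hx
  exact congrFun h ⟨x, hx⟩

/-- Let `N₁` be a normal subgroup of a group `F`, and let
`N = ⋂_{φ ∈ Aut F} φ(N₁)`.  Then `N` is normal, invariant under every automorphism of `F`
(i.e. characteristic), and if moreover `F` is finitely generated and `N₁` has finite index,
then `N` has finite index. -/
theorem stmt2 (F : Type) [Group F] (N₁ : Subgroup F) [N₁.Normal]
    (N : Subgroup F) (hN : N = ⨅ φ : MulAut F, Subgroup.map φ.toMonoidHom N₁) :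
    N.Normal ∧ (∀ φ : MulAut F, Subgroup.map φ.toMonoidHom N = N) ∧
      (Group.FG F → N₁.FiniteIndex → N.FiniteIndex) := by
  have key : ∀ φ : MulAut F, Subgroup.map φ.toMonoidHom N = N := by
    intro φ
    rw [hN, Subgroup.map_equiv_eq_comap_symm']
    rw [Subgroup.comap_iInf]
    have : ∀ ψ : MulAut F, Subgroup.comap (MulEquiv.symm ↑φ).toMonoidHom
        (Subgroup.map ψ.toMonoidHom N₁) = Subgroup.map (φ * ψ).toMonoidHom N₁ := by
      intro ψ
      rw [← Subgroup.map_equiv_eq_comap_symm']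
      rw [Subgroup.map_map]
      rfl
    simp_rw [this]
    exact Equiv.iInf_comp (g := fun ψ : MulAut F => Subgroup.map ψ.toMonoidHom N₁) (Equiv.mulLeft φ)
  have normal : N.Normal := by
    constructor
    intro n hn g
    have := key (MulAut.conj g)
    rw [← this]
    exact ⟨n, hn, rfl⟩
  refine ⟨normal, key, fun hFG hFI => ?_⟩
  classical
  haveI := hFI
  haveI : Finite (F ⧸ N₁) := N₁.finite_quotient_of_finiteIndex
  haveI : Finite (F →* Equiv.Perm (F ⧸ N₁)) := finite_homs F _ hFG
  set K : Subgroup (Equiv.Perm (F ⧸ N₁)) :=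
    MulAction.stabilizer (Equiv.Perm (F ⧸ N₁)) ((1 : F) : F ⧸ N₁) with hK
  set g : MulAut F → Subgroup F := fun φ => Subgroup.map φ.toMonoidHom N₁ with hgdef
  have hg : ∀ φ : MulAut F,
      g φ = Subgroup.comap ((MulAction.toPermHom F (F ⧸ N₁)).comp (φ⁻¹ : MulAut F).toMonoidHom) K := by
    intro φ
    ext x
    simp only [hgdef, Subgroup.mem_map_equiv, Subgroup.mem_comap, MonoidHom.comp_apply,
      MulAction.mem_stabilizer_iff, MulAction.toPermHom_apply, hK, Equiv.Perm.smul_def,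
      MulAction.toPerm_apply, MulAction.Quotient.smul_coe, smul_eq_mul, mul_one]
    rw [show ((1 : F) : F ⧸ N₁) = 1 from rfl, QuotientGroup.eq_one_iff]
    rfl
  have hfin : (Set.range g).Finite := by
    have hsub : Set.range g ⊆
        Set.range (fun f : F →* Equiv.Perm (F ⧸ N₁) => Subgroup.comap f K) := by
      rintro _ ⟨φ, rfl⟩
      exact ⟨_, (hg φ).symm⟩
    exact (Set.finite_range _).subset hsub
  haveI : Finite (Set.range g) := hfin
  have hNeq : N = ⨅ H : Set.range g, (H : Subgroup F) := by
    rw [hN]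
    apply le_antisymm
    · refine le_iInf ?_
      rintro ⟨H, φ, rfl⟩
      exact iInf_le _ φ
    · exact le_iInf fun φ => iInf_le (fun H : Set.range g => (H : Subgroup F)) ⟨g φ, φ, rfl⟩
  rw [hNeq]
  refine Subgroup.finiteIndex_iInf ?_
  rintro ⟨H, φ, rfl⟩
  refine ⟨?_⟩
  show (g φ).index ≠ 0
  have : g φ = Subgroup.comap (φ.symm : MulAut F).toMonoidHom N₁ :=
    Subgroup.map_equiv_eq_comap_symm' _ _
  rw [this, Subgroup.index_comap_of_surjective _ (φ.symm).surjective]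
  exact hFI.index_ne_zero
end

section
/- Let G be a finite group such that for every prime p and every Sylow p-subgroup P of G, the Bogomolov multiplier B₀(P) is trivial. Then the Bogomolov multiplier B₀(G) is trivial. -/
open CategoryTheory groupCohomology

/-- The additive group `ℚ/ℤ`. -/
abbrev QModZ : Type := ℚ ⧸ AddSubgroup.zmultiples (1 : ℚ)

/-- The trivial representation of a group `K` on `ℚ/ℤ` (with `ℤ` coefficients). -/
noncomputable abbrev trivQModZ (K : Type) [Group K] : Rep ℤ K := Rep.trivial ℤ K QModZ

variable {K : Type} [Group K]

/-- Restriction of 2-cocycles of the trivial `K`-representation `ℚ/ℤ` to a subgroup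
`A ≤ K`. -/
noncomputable def resTwoCocycles (A : Subgroup K) :
    cocycles₂ (trivQModZ K) →ₗ[ℤ] cocycles₂ (trivQModZ A) :=
  LinearMap.codRestrict (cocycles₂ (trivQModZ A))
    ((LinearMap.funLeft ℤ QModZ fun p : ↥A × ↥A => ((p.1 : K), (p.2 : K))).comp
      (cocycles₂ (trivQModZ K)).subtype)
    (fun f => by
      rw [mem_cocycles₂_def]
      intro g h j
      have hf := (mem_cocycles₂_def ((cocycles₂ (trivQModZ K)).subtype f)).mp f.2
        (g : K) (h : K) (j : K)
      simpa [LinearMap.funLeft] using hf)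

/-- Restriction on second group cohomology (in its explicit model
`H2 = twoCocycles ⧸ twoCoboundaries`) of the trivial representation `ℚ/ℤ`, from a group
`K` to a subgroup `A ≤ K`. -/
noncomputable def resH2 (A : Subgroup K) :
    (shortComplexH2 (trivQModZ K)).moduleCatLeftHomologyData.H →ₗ[ℤ]
      (shortComplexH2 (trivQModZ A)).moduleCatLeftHomologyData.H :=
  Submodule.mapQ _ _ (resTwoCocycles A) (by
    intro f hf
    obtain ⟨x, hx⟩ := hf
    change K → QModZ at x
    refine ⟨fun a => x (a : K), ?_⟩
    apply Subtype.ext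
    funext ⟨g, h⟩
    have hx' := congrFun (congrArg Subtype.val hx) ((g : K), (h : K))
    change (d₁₂ (trivQModZ A)).hom (fun a => x (a : K)) (g, h) = f.1 ((g : K), (h : K))
    change (d₁₂ (trivQModZ K)).hom x ((g : K), (h : K)) = f.1 ((g : K), (h : K)) at hx'
    rw [← hx', d₁₂_hom_apply, d₁₂_hom_apply]
    simp)

/-- Restriction on second group cohomology (Mathlib's `groupCohomology` in degree 2)
of the trivial representation `ℚ/ℤ`, from a group `K` to a subgroup `A ≤ K`: the map in
cohomology induced by the inclusion `A → K` together with restriction of the trivial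
representation. -/
noncomputable def resGroupCohomology₂ (A : Subgroup K) :
    groupCohomology (trivQModZ K) 2 ⟶ groupCohomology (trivQModZ A) 2 :=
  (H2Iso (trivQModZ K)).hom ≫ ModuleCat.ofHom (resH2 A) ≫ (H2Iso (trivQModZ A)).inv

/-- The homomorphism `H²(K, ℚ/ℤ) → Π_A H²(A, ℚ/ℤ)`, the product being over all abelian
subgroups `A` of `K`, whose components are the restriction maps. -/
noncomputable def totalRes (K : Type) [Group K] :
    groupCohomology (trivQModZ K) 2 →+
      ∀ A : {A : Subgroup K // IsMulCommutative A}, groupCohomology (trivQModZ A.1) 2 :=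
  AddMonoidHom.mk' (fun x A => resGroupCohomology₂ A.1 x)
    (fun a b => funext fun A => map_add (resGroupCohomology₂ A.1).hom a b)

/-- The Bogomolov multiplier `B₀(K)`: the kernel of the restriction homomorphism
`H²(K, ℚ/ℤ) → Π_A H²(A, ℚ/ℤ)`, where `A` runs over the abelian subgroups of `K`. -/
noncomputable def BogomolovMultiplier (K : Type) [Group K] :
    AddSubgroup (groupCohomology (trivQModZ K) 2) :=
  (totalRes K).ker

/-- `f` restricted to the subgroup `A` is a coboundary (for trivial coefficients). -/
def IsCobOn (A : Subgroup K) (f : K × K → QModZ) : Prop :=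
  ∃ u : ↥A → QModZ, ∀ a b : ↥A, u b - u (a * b) + u a = f ((a : K), (b : K))

/-- The key transfer (corestriction) argument: if a 2-cocycle on a finite group restricts
to a coboundary on a subgroup `H`, then `H.index` times the cocycle is a coboundary. -/
lemma transfer_cob {G : Type} [Group G] [Finite G] (H : Subgroup G) (F : G × G → QModZ)
    (hF : ∀ g h j : G, F (h, j) - F (g * h, j) + F (g, h * j) - F (g, h) = 0)
    (hc : IsCobOn H F) :
    ∃ v : G → QModZ, ∀ g₁ g₂ : G, v g₂ - v (g₁ * g₂) + v g₁ = H.index • F (g₁, g₂) := by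
  classical
  obtain ⟨u, hu⟩ := hc
  haveI : Fintype (G ⧸ H) := Fintype.ofFinite _
  set σ : G ⧸ H → G := fun c => c.out with hσ
  have hmem : ∀ (g : G) (c : G ⧸ H), (σ (g • c))⁻¹ * (g * σ c) ∈ H := by
    intro g c
    rw [← QuotientGroup.eq]
    show QuotientGroup.mk (g • c).out = QuotientGroup.mk (g * c.out)
    rw [QuotientGroup.out_eq']
    conv_lhs => rw [← QuotientGroup.out_eq' c]
    rfl
  set hel : G → G ⧸ H → ↥H := fun g c => ⟨(σ (g • c))⁻¹ * (g * σ c), hmem g c⟩ with hhel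
  have hcoc : ∀ (g₁ g₂ : G) (c : G ⧸ H), hel g₁ (g₂ • c) * hel g₂ c = hel (g₁ * g₂) c := by
    intro g₁ g₂ c
    ext
    show (σ (g₁ • g₂ • c))⁻¹ * (g₁ * σ (g₂ • c)) * ((σ (g₂ • c))⁻¹ * (g₂ * σ c)) = _
    rw [smul_smul]
    show _ = (σ ((g₁ * g₂) • c))⁻¹ * ((g₁ * g₂) * σ c)
    group
  set v : G → QModZ := fun g => ∑ c : G ⧸ H,
    (u (hel g c) - F (σ (g • c), (hel g c : G)) + F (g, σ c)) with hv
  refine ⟨v, fun g₁ g₂ => ?_⟩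
  have key : ∀ c : G ⧸ H,
      (u (hel g₂ c) - F (σ (g₂ • c), (hel g₂ c : G)) + F (g₂, σ c))
      - (u (hel (g₁ * g₂) c) - F (σ ((g₁ * g₂) • c), (hel (g₁ * g₂) c : G)) + F (g₁ * g₂, σ c))
      + (u (hel g₁ (g₂ • c)) - F (σ (g₁ • g₂ • c), (hel g₁ (g₂ • c) : G)) + F (g₁, σ (g₂ • c)))
      = F (g₁, g₂) := by
    intro c
    set a : G := (hel g₁ (g₂ • c) : G) with ha
    set b : G := (hel g₂ c : G) with hb
    have hab : ((hel (g₁ * g₂) c : G)) = a * b := by rw [← hcoc]; rfl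
    have hσc : ((g₁ * g₂) • c) = g₁ • g₂ • c := by rw [mul_smul]
    set σ₁ := σ c
    set σ₂ := σ (g₂ • c)
    set σ₃ := σ (g₁ • g₂ • c)
    have e0 : u (hel g₂ c) - u (hel (g₁ * g₂) c) + u (hel g₁ (g₂ • c)) = F (a, b) := by
      rw [← hcoc g₁ g₂ c]; exact hu _ _
    have h1 : σ₃ * a = g₁ * σ₂ := by
      rw [ha]; show σ₃ * (σ₃⁻¹ * (g₁ * σ₂)) = _; group
    have h2 : σ₂ * b = g₂ * σ₁ := by
      rw [hb]; show σ₂ * (σ₂⁻¹ * (g₂ * σ₁)) = _; group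
    have I1 := hF σ₃ a b
    have I2 := hF g₁ σ₂ b
    have I3 := hF g₁ g₂ σ₁
    rw [h1] at I1
    rw [h2] at I2
    rw [hσc, hab]
    have hσ3 : σ (g₁ • g₂ • c) = σ₃ := rfl
    rw [hσ3, ← sub_eq_zero]
    have expand : u (hel g₂ c) - F (σ₂, b) + F (g₂, σ₁) -
          (u (hel (g₁ * g₂) c) - F (σ₃, a * b) + F (g₁ * g₂, σ₁)) +
          (u (hel g₁ (g₂ • c)) - F (σ₃, a) + F (g₁, σ₂)) - F (g₁, g₂)
        = (u (hel g₂ c) - u (hel (g₁ * g₂) c) + u (hel g₁ (g₂ • c)) - F (g₁ * σ₂, b)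
            + F (σ₃, a * b) - F (σ₃, a))
          - (F (σ₂, b) - F (g₁ * σ₂, b) + F (g₁, g₂ * σ₁) - F (g₁, σ₂))
          + (F (g₂, σ₁) - F (g₁ * g₂, σ₁) + F (g₁, g₂ * σ₁) - F (g₁, g₂)) := by abel
    rw [expand, e0, I1, I2, I3]
    simp
  have reindex : ∀ g : G, (∑ c : G ⧸ H,
      (u (hel g (g₂ • c)) - F (σ (g • g₂ • c), (hel g (g₂ • c) : G)) + F (g, σ (g₂ • c)))) = v g := by
    intro g
    exact Equiv.sum_comp (MulAction.toPerm g₂ : Equiv.Perm (G ⧸ H))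
      (fun c => u (hel g c) - F (σ (g • c), (hel g c : G)) + F (g, σ c))
  calc v g₂ - v (g₁ * g₂) + v g₁
      = ∑ c : G ⧸ H, ((u (hel g₂ c) - F (σ (g₂ • c), (hel g₂ c : G)) + F (g₂, σ c))
        - (u (hel (g₁ * g₂) c) - F (σ ((g₁ * g₂) • c), (hel (g₁ * g₂) c : G)) + F (g₁ * g₂, σ c))
        + (u (hel g₁ (g₂ • c)) - F (σ (g₁ • g₂ • c), (hel g₁ (g₂ • c) : G)) + F (g₁, σ (g₂ • c)))) := by
        rw [Finset.sum_add_distrib, Finset.sum_sub_distrib, reindex g₁]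
    _ = ∑ _c : G ⧸ H, F (g₁, g₂) := Finset.sum_congr rfl fun c _ => key c
    _ = H.index • F (g₁, g₂) := by
        rw [Finset.sum_const, Finset.card_univ, Subgroup.index_eq_card, Nat.card_eq_fintype_card]

lemma mk_eq_zero_iff_cob (f : LinearMap.ker (shortComplexH2 (trivQModZ K)).g.hom) :
    (Submodule.Quotient.mk f : (shortComplexH2 (trivQModZ K)).moduleCatLeftHomologyData.H) = 0
      ↔ ∃ u : K → QModZ, ∀ a b : K, u b - u (a * b) + u a = f.1 (a, b) := by
  rw [Submodule.Quotient.mk_eq_zero]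
  constructor
  · rintro ⟨x, hx⟩
    change K → QModZ at x
    refine ⟨x, fun a b => ?_⟩
    have hx' := congrFun (congrArg Subtype.val hx) (a, b)
    change (d₁₂ (trivQModZ K)).hom x (a, b) = f.1 (a, b) at hx'
    rw [← hx', d₁₂_hom_apply]
    simp
  · rintro ⟨u, hu⟩
    refine ⟨u, ?_⟩
    apply Subtype.ext
    funext ⟨a, b⟩
    change (d₁₂ (trivQModZ K)).hom u (a, b) = f.1 (a, b)
    rw [d₁₂_hom_apply, ← hu a b]
    simp

lemma res_eq_zero_iff (A : Subgroup K) (x : groupCohomology (trivQModZ K) 2)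
    (f : LinearMap.ker (shortComplexH2 (trivQModZ K)).g.hom)
    (hf : (H2Iso (trivQModZ K)).hom x = Submodule.Quotient.mk f) :
    resGroupCohomology₂ A x = 0 ↔ IsCobOn A (f.1 : K × K → QModZ) := by
  have hx : resGroupCohomology₂ A x
      = (H2Iso (trivQModZ A)).inv (resH2 A ((H2Iso (trivQModZ K)).hom x)) := rfl
  rw [hx, hf]
  have h2 : resH2 A (Submodule.Quotient.mk f) = (Submodule.Quotient.mk (resTwoCocycles A f) :
      (shortComplexH2 (trivQModZ A)).moduleCatLeftHomologyData.H) := by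
    rfl
  rw [h2]
  constructor
  · intro h0
    have hz : (Submodule.Quotient.mk (resTwoCocycles A f) :
        (shortComplexH2 (trivQModZ A)).moduleCatLeftHomologyData.H) = 0 := by
      have h0x : (H2Iso (trivQModZ A)).toLinearEquiv.symm
          (Submodule.Quotient.mk (resTwoCocycles A f)) = 0 := h0
      exact ((H2Iso (trivQModZ A)).toLinearEquiv.symm.map_eq_zero_iff).mp h0x
    obtain ⟨u, hu⟩ := (mk_eq_zero_iff_cob _).mp hz
    exact ⟨u, fun a b => hu a b⟩
  · intro ⟨u, hu⟩
    have hz : (Submodule.Quotient.mk (resTwoCocycles A f) :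
        (shortComplexH2 (trivQModZ A)).moduleCatLeftHomologyData.H) = 0 := by
      exact (mk_eq_zero_iff_cob _).mpr ⟨u, fun a b => hu a b⟩
    exact ((H2Iso (trivQModZ A)).toLinearEquiv.symm.map_eq_zero_iff).mpr hz

/-- If `G` is a finite group all of whose Sylow subgroups have trivial Bogomolov
multiplier, then `G` has trivial Bogomolov multiplier. -/
theorem stmt5 (G : Type) [Group G] [Finite G]
    (h : ∀ (p : ℕ), p.Prime → ∀ P : Sylow p G,
      BogomolovMultiplier ↥(P : Subgroup G) = ⊥) :
    BogomolovMultiplier G = ⊥ := by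
  rw [eq_bot_iff]
  intro x hx
  rw [AddSubgroup.mem_bot]
  replace hx : ∀ A : {A : Subgroup G // IsMulCommutative A},
      resGroupCohomology₂ A.1 x = 0 := fun A => congrFun hx A
  -- pick a representing cocycle
  obtain ⟨f, hf⟩ := Submodule.Quotient.mk_surjective _ ((H2Iso (trivQModZ G)).hom x)
  replace hf : (H2Iso (trivQModZ G)).hom x = Submodule.Quotient.mk f := hf.symm
  set F : G × G → QModZ := (f.1 : G × G → QModZ) with hFdef
  have hF : ∀ g h j : G, F (h, j) - F (g * h, j) + F (g, h * j) - F (g, h) = 0 := by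
    intro g h j
    have hf2 : F ∈ cocycles₂ (trivQModZ G) := f.2
    have := (mem_cocycles₂_def (A := trivQModZ G) (F)).mp hf2 g h j
    simpa [Rep.trivial_ρ_apply] using this
  -- from a restriction being a coboundary to killing `x` by the index
  have hkill : ∀ H : Subgroup G, IsCobOn H F → H.index • x = 0 := by
    intro H hc
    obtain ⟨v, hv⟩ := transfer_cob H F hF hc
    have hmemb : (Submodule.Quotient.mk (H.index • f) :
        (shortComplexH2 (trivQModZ G)).moduleCatLeftHomologyData.H) = 0 := by
      rw [mk_eq_zero_iff_cob]
      exact ⟨v, fun g₁ g₂ => by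
        rw [hv g₁ g₂]; rfl⟩
    have : (H2Iso (trivQModZ G)).toLinearEquiv x = Submodule.Quotient.mk f := hf
    have hsmul : (H2Iso (trivQModZ G)).toLinearEquiv (H.index • x)
        = Submodule.Quotient.mk (H.index • f) := by
      rw [map_nsmul, this]
      rfl
    have : (Submodule.Quotient.mk (H.index • f) :
        (shortComplexH2 (trivQModZ G)).moduleCatLeftHomologyData.H) = 0 := hmemb
    rw [this] at hsmul
    exact ((H2Iso (trivQModZ G)).toLinearEquiv.map_eq_zero_iff).mp hsmul
  -- abelian subgroups restrict to coboundaries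
  have habel : ∀ A : Subgroup G, IsMulCommutative A → IsCobOn A F := by
    intro A hA
    exact (res_eq_zero_iff A x f hf).mp (hx ⟨A, hA⟩)
  -- Sylow subgroups restrict to coboundaries
  have hsyl : ∀ (p : ℕ), p.Prime → ∀ P : Sylow p G, IsCobOn (P : Subgroup G) F := by
    intro p hp P
    rw [← res_eq_zero_iff (P : Subgroup G) x f hf]
    have hBP := h p hp P
    have hmem : resGroupCohomology₂ (P : Subgroup G) x ∈ BogomolovMultiplier ↥(P : Subgroup G) := by
      show totalRes _ _ = 0
      funext B
      show resGroupCohomology₂ B.1 (resGroupCohomology₂ (P : Subgroup G) x) = 0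
      -- the class of the restricted cocycle
      have hf' : (H2Iso (trivQModZ ↥(P : Subgroup G))).hom
          (resGroupCohomology₂ (P : Subgroup G) x)
          = Submodule.Quotient.mk (resTwoCocycles (P : Subgroup G) f) := by
        show (H2Iso (trivQModZ ↥(P : Subgroup G))).toLinearEquiv
          ((H2Iso (trivQModZ ↥(P : Subgroup G))).toLinearEquiv.symm
            (resH2 (P : Subgroup G) ((H2Iso (trivQModZ G)).hom x))) = _
        rw [LinearEquiv.apply_symm_apply, hf]
        rfl
      rw [res_eq_zero_iff B.1 _ _ hf']
      -- the image of B in G is abelian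
      haveI : IsMulCommutative B.1 := B.2
      obtain ⟨u', hu'⟩ := habel (B.1.map (P : Subgroup G).subtype) inferInstance
      refine ⟨fun b => u' ⟨((b : ↥(P : Subgroup G)) : G),
        Subgroup.mem_map_of_mem _ b.2⟩, fun a b => ?_⟩
      have := hu' ⟨((a : ↥(P : Subgroup G)) : G), Subgroup.mem_map_of_mem _ a.2⟩
        ⟨((b : ↥(P : Subgroup G)) : G), Subgroup.mem_map_of_mem _ b.2⟩
      convert this using 3
      all_goals rfl
    rw [hBP, AddSubgroup.mem_bot] at hmem
    exact hmem
  -- the bottom subgroup is abelian, giving `|G| • x = 0`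
  haveI hbotcomm : IsMulCommutative (⊥ : Subgroup G) := by
    constructor
    constructor
    intro a b
    have ha : (a : G) = 1 := a.2
    have hb : (b : G) = 1 := b.2
    ext
    simp [ha, hb]
  have hcard : Nat.card G • x = 0 := by
    have := hkill ⊥ (habel ⊥ hbotcomm)
    rwa [Subgroup.index_bot] at this
  -- order considerations
  have hord_card : addOrderOf x ∣ Nat.card G := addOrderOf_dvd_of_nsmul_eq_zero hcard
  have hord_ne : addOrderOf x ≠ 0 := by
    intro h0
    rw [h0] at hord_card
    exact Nat.card_pos.ne' (Nat.eq_zero_of_zero_dvd hord_card)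
  have hord_one : addOrderOf x = 1 := by
    by_contra hne
    obtain ⟨q, hq, hqdvd⟩ := Nat.exists_prime_and_dvd hne
    haveI : Fact q.Prime := ⟨hq⟩
    haveI : Finite (Sylow q G) := by
      haveI : Finite (Subgroup G) := by
        exact Finite.of_injective (fun H => (H : Set G)) SetLike.coe_injective
      exact Finite.of_injective (fun P : Sylow q G => (P : Subgroup G))
        (fun _ _ hPQ => Sylow.ext hPQ)
    obtain ⟨P⟩ := (inferInstance : Nonempty (Sylow q G))
    have hPkill : (P : Subgroup G).index • x = 0 := hkill _ (hsyl q hq P)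
    have : addOrderOf x ∣ (P : Subgroup G).index := addOrderOf_dvd_of_nsmul_eq_zero hPkill
    exact P.not_dvd_index (hqdvd.trans this)
  have hx0 := addOrderOf_nsmul_eq_zero x
  rwa [hord_one, one_nsmul] at hx0
end

section
/- Let q < p be primes with q ≥ 3, and let r be an integer with 2 ≤ r < p and r^q ≡ 1 (mod p). Let G = ZMod p ⋊ ZMod q be the semidirect product in which the class of k ∈ ZMod q acts on the additive group ZMod p as multiplication by r^k (well defined since r^q ≡ 1 mod p), written multiplicatively, and set a = (1,0), b = (0,1), so that a has order p, b has order q and b·a·b⁻¹ = a^r. Then, with c = b⁻¹ and d = b·a⁻¹: (i) [a,b] = a^{1-r} ≠ 1, (ii) [a,b]·[c,d] = 1, and (iii) there exists a surjective group homomorphism θ from the genus-2 surface group F to G with θ(x1) = a, θ(y1) = b, θ(x2) = c, θ(y2) = d, and [x1,y1] ∉ ker(θ). -/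
open scoped commutatorElement

/-- The single relator `[x₁,y₁]·[x₂,y₂]` of the genus-2 surface group, inside the free
group on four generators. -/
def surfaceRels : Set (FreeGroup (Fin 4)) :=
  {⁅FreeGroup.of (0 : Fin 4), FreeGroup.of 1⁆ * ⁅FreeGroup.of (2 : Fin 4), FreeGroup.of 3⁆}

/-- The genus-2 surface group, presented on generators `x₁, y₁, x₂, y₂` with the single
relator `[x₁,y₁]·[x₂,y₂]`. -/
abbrev SurfaceGroup : Type := PresentedGroup surfaceRels

def x₁ : SurfaceGroup := PresentedGroup.of 0
def y₁ : SurfaceGroup := PresentedGroup.of 1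
def x₂ : SurfaceGroup := PresentedGroup.of 2
def y₂ : SurfaceGroup := PresentedGroup.of 3

/-- The unit of `ZMod p` given by `r`, where `0 < r < p` and `p` is prime. -/
def rUnit (p r : ℕ) (hp : p.Prime) (hr2 : 2 ≤ r) (hrp : r < p) : (ZMod p)ˣ :=
  ZMod.unitOfCoprime r
    (Nat.Coprime.symm ((Nat.Prime.coprime_iff_not_dvd hp).mpr
      (Nat.not_dvd_of_pos_of_lt (by omega) hrp)))

/-- The tautological monoid homomorphism `AddAut A →* MulAut (Multiplicative A)`. -/
def addAutToMulAut (A : Type) [AddZeroClass A] :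
    Multiplicative (AddAut A) →* MulAut (Multiplicative A) where
  toFun e := AddEquiv.toMultiplicative e.toAdd
  map_one' := by ext x; rfl
  map_mul' a b := by ext x; rfl

/-- The homomorphism `ZMod q → AddAut (ZMod p)` (written multiplicatively) sending the
class of `k` to multiplication by `r^k`; well defined because `r^q ≡ 1 (mod p)`. -/
noncomputable def actionHom (p q r : ℕ) (hp : p.Prime) (hr2 : 2 ≤ r) (hrp : r < p)
    (hmod : r ^ q ≡ 1 [MOD p]) :
    Multiplicative (ZMod q) →* MulAut (Multiplicative (ZMod p)) :=
  AddMonoidHom.toMultiplicativeLeft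
    (ZMod.lift q ⟨zmultiplesHom _
      (Additive.ofMul (((addAutToMulAut (ZMod p)).comp AddAut.mulLeft)
        (rUnit p r hp hr2 hrp))), by
      have hu : (rUnit p r hp hr2 hrp) ^ q = 1 := by
        apply Units.ext
        rw [Units.val_pow_eq_pow_val, Units.val_one]
        show ((ZMod.unitOfCoprime r _ : (ZMod p)ˣ) : ZMod p) ^ q = 1
        rw [ZMod.coe_unitOfCoprime, ← Nat.cast_pow]
        have := (ZMod.natCast_eq_natCast_iff (r ^ q) 1 p).mpr hmod
        simpa using this
      have hb : (((addAutToMulAut (ZMod p)).comp AddAut.mulLeft)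
          (rUnit p r hp hr2 hrp)) ^ q = 1 := by
        rw [← map_pow, hu, map_one]
      rw [zmultiplesHom_apply, ← ofMul_zpow, zpow_natCast, hb]
      rfl⟩)

/-- The semidirect product `ZMod p ⋊ ZMod q` (written multiplicatively), in which the
class of `k ∈ ZMod q` acts on `ZMod p` as multiplication by `r^k`. -/
noncomputable abbrev Gpqr (p q r : ℕ) (hp : p.Prime) (hr2 : 2 ≤ r) (hrp : r < p)
    (hmod : r ^ q ≡ 1 [MOD p]) : Type :=
  Multiplicative (ZMod p) ⋊[actionHom p q r hp hr2 hrp hmod] Multiplicative (ZMod q)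

/-- for primes `q < p` with `q ≥ 3` and `2 ≤ r < p` with `r^q ≡ 1 (mod p)`,
in `G = ZMod p ⋊ ZMod q` with `a = (1,0)`, `b = (0,1)`, `c = b⁻¹`, `d = b·a⁻¹`:
`a` has order `p`, `b` has order `q`, `b·a·b⁻¹ = a^r`, `[a,b] = a^{1-r} ≠ 1`,
`[a,b]·[c,d] = 1`, and there is a surjective homomorphism `θ` from the genus-2 surface
group onto `G` with `θ(x₁) = a`, `θ(y₁) = b`, `θ(x₂) = c`, `θ(y₂) = d` and
`[x₁,y₁] ∉ ker θ`. -/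
theorem stmt7 (p q r : ℕ) (hq : q.Prime) (hp : p.Prime) (hq3 : 3 ≤ q) (hqp : q < p)
    (hr2 : 2 ≤ r) (hrp : r < p) (hmod : r ^ q ≡ 1 [MOD p]) :
    ∀ a b : Gpqr p q r hp hr2 hrp hmod,
      a = SemidirectProduct.inl (Multiplicative.ofAdd (1 : ZMod p)) →
      b = SemidirectProduct.inr (Multiplicative.ofAdd (1 : ZMod q)) →
      ∀ c d : Gpqr p q r hp hr2 hrp hmod, c = b⁻¹ → d = b * a⁻¹ →
      (orderOf a = p ∧ orderOf b = q ∧ b * a * b⁻¹ = a ^ r) ∧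
      (⁅a, b⁆ = a ^ ((1 : ℤ) - (r : ℤ)) ∧ ⁅a, b⁆ ≠ 1) ∧
      ⁅a, b⁆ * ⁅c, d⁆ = 1 ∧
      ∃ θ : SurfaceGroup →* Gpqr p q r hp hr2 hrp hmod,
        Function.Surjective θ ∧
        θ x₁ = a ∧ θ y₁ = b ∧ θ x₂ = c ∧ θ y₂ = d ∧ ⁅x₁, y₁⁆ ∉ θ.ker := by
  
  intro a b ha hb c d hc hd
  haveI : NeZero p := ⟨hp.ne_zero⟩
  haveI : NeZero q := ⟨hq.ne_zero⟩
  set φ := actionHom p q r hp hr2 hrp hmod with hφdef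
  -- The action of `b` multiplies by `r`.
  have hphi : ∀ n : Multiplicative (ZMod p),
      φ (Multiplicative.ofAdd (1 : ZMod q)) n
        = Multiplicative.ofAdd ((r : ZMod p) * n.toAdd) := by
    intro n
    have h1 : ((1 : ℤ) : ZMod q) = (1 : ZMod q) := by push_cast; rfl
    rw [hφdef]
    unfold actionHom
    rw [AddMonoidHom.toMultiplicativeLeft_apply_apply, toAdd_ofAdd, ← h1, ZMod.lift_coe]
    simp [zmultiplesHom_apply, addAutToMulAut, rUnit, AddAut.mulLeft, Units.smul_def,
      ZMod.coe_unitOfCoprime]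
    rfl
  have hba : b * a * b⁻¹ = a ^ r := by
    rw [ha, hb, ← map_inv, ← SemidirectProduct.inl_aut, hphi, ← map_pow]
    congr 1
    rw [toAdd_ofAdd, mul_one, ← ofAdd_nsmul, nsmul_eq_mul, mul_one]
  have hoa : orderOf a = p := by
    rw [ha, orderOf_injective _ SemidirectProduct.inl_injective,
      orderOf_ofAdd_eq_addOrderOf, ZMod.addOrderOf_one]
  have hob : orderOf b = q := by
    rw [hb, orderOf_injective _ SemidirectProduct.inr_injective,
      orderOf_ofAdd_eq_addOrderOf, ZMod.addOrderOf_one]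
  have hbainv : b * a⁻¹ * b⁻¹ = a ^ (-(r : ℤ)) := by
    rw [zpow_neg, zpow_natCast, ← hba]; group
  have hab : ⁅a, b⁆ = a ^ ((1 : ℤ) - (r : ℤ)) := by
    have h1 : ⁅a, b⁆ = a * (b * a⁻¹ * b⁻¹) := by group
    rw [h1, hbainv, sub_eq_add_neg, zpow_add, zpow_one]
  have hcd : ⁅c, d⁆ = a ^ ((r : ℤ) - 1) := by
    have h1 : ⁅c, d⁆ = a⁻¹ * (b * a * b⁻¹) := by rw [hc, hd]; group
    rw [h1, hba, ← zpow_natCast, ← zpow_neg_one, ← zpow_add, neg_add_eq_sub]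
  have habne : ⁅a, b⁆ ≠ 1 := by
    rw [hab]
    intro h
    have hdvd : ((orderOf a : ℤ)) ∣ ((1 : ℤ) - (r : ℤ)) :=
      orderOf_dvd_iff_zpow_eq_one.mpr h
    rw [hoa] at hdvd
    have hdvd' : ((p : ℤ)) ∣ ((r : ℤ) - 1) := by
      have := hdvd.neg_right
      simpa using this
    have hle : (p : ℤ) ≤ (r : ℤ) - 1 := Int.le_of_dvd (by omega) hdvd'
    omega
  have habcd : ⁅a, b⁆ * ⁅c, d⁆ = 1 := by
    rw [hab, hcd, ← zpow_add]
    norm_num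
  refine ⟨⟨hoa, hob, hba⟩, ⟨hab, habne⟩, habcd, ?_⟩
  -- build θ
  set f : Fin 4 → Gpqr p q r hp hr2 hrp hmod := ![a, b, c, d] with hf
  have hf0 : f 0 = a := rfl
  have hf1 : f 1 = b := rfl
  have hf2 : f 2 = c := rfl
  have hf3 : f 3 = d := rfl
  have hrel : ∀ w ∈ surfaceRels, FreeGroup.lift f w = 1 := by
    intro w hw
    rw [surfaceRels, Set.mem_singleton_iff] at hw
    subst hw
    rw [map_mul, map_commutatorElement, map_commutatorElement,
      FreeGroup.lift_apply_of, FreeGroup.lift_apply_of, FreeGroup.lift_apply_of, FreeGroup.lift_apply_of,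
      hf0, hf1, hf2, hf3]
    exact habcd
  refine ⟨PresentedGroup.toGroup hrel, ?_, ?_, ?_, ?_, ?_, ?_⟩
  · -- surjectivity
    set θ := PresentedGroup.toGroup hrel
    have hax : a ∈ θ.range := ⟨x₁, PresentedGroup.toGroup.of hrel⟩
    have hbx : b ∈ θ.range := ⟨y₁, PresentedGroup.toGroup.of hrel⟩
    have hsur : ∀ g : Gpqr p q r hp hr2 hrp hmod, g ∈ θ.range := by
      intro g
      rw [← SemidirectProduct.inl_left_mul_inr_right g]
      refine mul_mem ?_ ?_
      · have hg : SemidirectProduct.inl (φ := φ) g.left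
            = a ^ (Multiplicative.toAdd g.left).val := by
          rw [ha, ← map_pow]
          congr 1
          rw [← ofAdd_nsmul, nsmul_eq_mul, mul_one, ZMod.natCast_val, ZMod.cast_id]
          rfl
        rw [hg]
        exact pow_mem hax _
      · have hg : SemidirectProduct.inr (φ := φ) g.right
            = b ^ (Multiplicative.toAdd g.right).val := by
          rw [hb, ← map_pow]
          congr 1
          rw [← ofAdd_nsmul, nsmul_eq_mul, mul_one, ZMod.natCast_val, ZMod.cast_id]
          rfl
        rw [hg]
        exact pow_mem hbx _
    intro g
    exact hsur g
  · exact PresentedGroup.toGroup.of hrel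
  · exact PresentedGroup.toGroup.of hrel
  · exact PresentedGroup.toGroup.of hrel
  · exact PresentedGroup.toGroup.of hrel
  · rw [MonoidHom.mem_ker, map_commutatorElement]
    show ¬ ⁅PresentedGroup.toGroup hrel (PresentedGroup.of 0),
        PresentedGroup.toGroup hrel (PresentedGroup.of 1)⁆ = 1
    rw [PresentedGroup.toGroup.of hrel, PresentedGroup.toGroup.of hrel, hf0, hf1]
    exact habne
end

section
/- Let p be a prime and r an integer with 2 ≤ r ≤ p − 1. Let G be a group containing elements a and b such that a has order exactly p and b·a·b⁻¹ = a^r. Then the element E = (b·a⁻¹)·b³·[a,b]·b⁻²·a·b⁻² of G equals the identity if and only if r³ ≡ 1 (mod p). (Here E is the image, under the substitution x1 ↦ a, y1 ↦ b, x2 ↦ b⁻¹, y2 ↦ b·a⁻¹, of the word σ₅(σ₄(σ₃([x1,y1]))) = y2·x2⁻²·y1·[x1,y1]·x2²·y2⁻¹·y1⁻¹.) -/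
open scoped commutatorElement

/-- Let `p` be prime, `2 ≤ r ≤ p - 1`, and let `a, b` be elements of a group `G` with
`a` of order exactly `p` and `b·a·b⁻¹ = a^r`.  Then
`E = (b·a⁻¹)·b³·[a,b]·b⁻²·a·b⁻²` equals the identity iff `r³ ≡ 1 (mod p)`. -/
theorem stmt8 (G : Type) [Group G] (p r : ℕ) (hp : p.Prime)
    (hr2 : 2 ≤ r) (hrp : r ≤ p - 1) (a b : G)
    (ha : orderOf a = p) (hab : b * a * b⁻¹ = a ^ r) :
    (b * a⁻¹) * b ^ (3 : ℕ) * ⁅a, b⁆ * b ^ (-2 : ℤ) * a * b ^ (-2 : ℤ) = 1 ↔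
      (p : ℤ) ∣ (r : ℤ) ^ 3 - 1 := by
  have hp2 : 2 ≤ p := hp.two_le
  have hrltp : r < p := by omega
  have key : ∀ n : ℕ, ∀ m : ℤ, b ^ n * a ^ m * (b ^ n)⁻¹ = a ^ (m * (r : ℤ) ^ n) := by
    intro n
    induction n with
    | zero => intro m; simp
    | succ k ih =>
      intro m
      have h1 : b * a ^ m * b⁻¹ = a ^ (m * (r : ℤ)) := by
        have h2 : (b * a * b⁻¹) ^ m = b * a ^ m * b⁻¹ := conj_zpow
        rw [← h2, hab, ← zpow_natCast a r, ← zpow_mul]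
        ring_nf
      calc b ^ (k+1) * a ^ m * (b ^ (k+1))⁻¹
          = b ^ k * (b * a ^ m * b⁻¹) * (b ^ k)⁻¹ := by group
        _ = b ^ k * a ^ (m * (r : ℤ)) * (b ^ k)⁻¹ := by rw [h1]
        _ = a ^ (m * (r : ℤ) * (r : ℤ) ^ k) := ih _
        _ = a ^ (m * (r : ℤ) ^ (k+1)) := by ring_nf
  have hE : (b * a⁻¹) * b ^ (3 : ℕ) * ⁅a, b⁆ * b ^ (-2 : ℤ) * a * b ^ (-2 : ℤ)
      = (b ^ 1 * a ^ (-1 : ℤ) * (b ^ 1)⁻¹) * (b ^ 4 * a ^ (1 : ℤ) * (b ^ 4)⁻¹)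
        * (b ^ 5 * a ^ (-1 : ℤ) * (b ^ 5)⁻¹) * (b ^ 2 * a ^ (1 : ℤ) * (b ^ 2)⁻¹) := by
    simp only [commutatorElement_def]
    group
  rw [hE, key 1, key 4, key 5, key 2, ← zpow_add, ← zpow_add, ← zpow_add]
  have horder : ∀ n : ℤ, a ^ n = 1 ↔ (p : ℤ) ∣ n := by
    intro n
    rw [← orderOf_dvd_iff_zpow_eq_one, ha]
  rw [horder]
  have heq : -1 * (r : ℤ) ^ 1 + 1 * (r : ℤ) ^ 4 + -1 * (r : ℤ) ^ 5 + 1 * (r : ℤ) ^ 2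
      = -(r : ℤ) * (((r : ℤ) - 1) * ((r : ℤ) ^ 3 - 1)) := by ring
  rw [heq]
  have hpI : Prime (p : ℤ) := Nat.prime_iff_prime_int.1 hp
  have hnr : ¬ (p : ℤ) ∣ (r : ℤ) := by
    rw [Int.natCast_dvd_natCast]
    intro h
    have := Nat.le_of_dvd (by omega) h
    omega
  have hnr1 : ¬ (p : ℤ) ∣ ((r : ℤ) - 1) := by
    have : (r : ℤ) - 1 = ((r - 1 : ℕ) : ℤ) := by push_cast [Nat.cast_sub (by omega : 1 ≤ r)]; ring
    rw [this, Int.natCast_dvd_natCast]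
    intro h
    have := Nat.le_of_dvd (by omega) h
    omega
  constructor
  · intro h
    have h' : (p : ℤ) ∣ (r : ℤ) * (((r : ℤ) - 1) * ((r : ℤ) ^ 3 - 1)) :=
      dvd_neg.mp (by simpa [neg_mul] using h)
    rcases hpI.dvd_mul.mp h' with h1 | h2
    · exact absurd h1 hnr
    · rcases hpI.dvd_mul.mp h2 with h3 | h4
      · exact absurd h3 hnr1
      · exact h4
  · intro h
    exact Dvd.dvd.mul_left (Dvd.dvd.mul_left h _) _
end

section
/- Let F be the genus-2 surface group with generators x1, y1, x2, y2. Each of the following five assignments on the generators extends to an automorphism of F: σ₁ : (x1,y1,x2,y2) ↦ (x1·y1, y1, x2, y2); σ₂ : (x1,y1,x2,y2) ↦ (x1, y1·x1⁻¹, x2, y2); σ₃ : (x1,y1,x2,y2) ↦ (x2⁻¹·y1·x1, y1, x2, x2⁻¹·y1·y2); σ₄ : (x1,y1,x2,y2) ↦ (x1, y1, x2·y2⁻¹, y2); σ₅ : (x1,y1,x2,y2) ↦ (x1, y1, x2, y2·x2⁻¹). Moreover, the inverse of σⱼ is the automorphism given on generators by: σ₁⁻¹ : ↦ (x1·y1⁻¹,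 y1, x2, y2); σ₂⁻¹ : ↦ (x1, y1·x1, x2, y2); σ₃⁻¹ : ↦ (y1⁻¹·x2·x1, y1, x2, y1⁻¹·x2·y2); σ₄⁻¹ : ↦ (x1, y1, x2·y2, y2); σ₅⁻¹ : ↦ (x1, y1, x2, y2·x2). -/
open scoped commutatorElement

lemma surfRel : ⁅x₁, y₁⁆ * ⁅x₂, y₂⁆ = 1 := by
  have : (QuotientGroup.mk (⁅FreeGroup.of (0 : Fin 4), FreeGroup.of 1⁆ *
      ⁅FreeGroup.of (2 : Fin 4), FreeGroup.of 3⁆) : SurfaceGroup) = 1 := by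
    apply (QuotientGroup.eq_one_iff _).2
    exact Subgroup.subset_normalClosure rfl
  exact this

lemma surfRel' : x₁ * y₁ * x₁⁻¹ * y₁⁻¹ * (x₂ * y₂ * x₂⁻¹ * y₂⁻¹) = 1 := by
  have := surfRel
  simpa [commutatorElement_def, mul_assoc] using this

def mkHom (f : Fin 4 → SurfaceGroup)
    (h : f 0 * f 1 * (f 0)⁻¹ * (f 1)⁻¹ * (f 2 * f 3 * (f 2)⁻¹ * (f 3)⁻¹) = 1) :
    SurfaceGroup →* SurfaceGroup :=
  PresentedGroup.toGroup (f := f) (by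
    intro r hr
    rw [surfaceRels, Set.mem_singleton_iff] at hr
    subst hr
    simpa [commutatorElement_def, mul_assoc] using h)

@[simp] lemma mkHom_x₁ (f h) : mkHom f h x₁ = f 0 := PresentedGroup.toGroup.of _
@[simp] lemma mkHom_y₁ (f h) : mkHom f h y₁ = f 1 := PresentedGroup.toGroup.of _
@[simp] lemma mkHom_x₂ (f h) : mkHom f h x₂ = f 2 := PresentedGroup.toGroup.of _
@[simp] lemma mkHom_y₂ (f h) : mkHom f h y₂ = f 3 := PresentedGroup.toGroup.of _

lemma hom_inv_ext (φ ψ : SurfaceGroup →* SurfaceGroup)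
    (h0 : ψ (φ x₁) = x₁) (h1 : ψ (φ y₁) = y₁) (h2 : ψ (φ x₂) = x₂) (h3 : ψ (φ y₂) = y₂) :
    ∀ x, ψ (φ x) = x := by
  have : ψ.comp φ = MonoidHom.id _ := by
    apply PresentedGroup.ext
    intro i
    fin_cases i
    · exact h0
    · exact h1
    · exact h2
    · exact h3
  intro x
  exact DFunLike.congr_fun this x

def mkAut (φ ψ : SurfaceGroup →* SurfaceGroup)
    (h0 : ψ (φ x₁) = x₁) (h1 : ψ (φ y₁) = y₁) (h2 : ψ (φ x₂) = x₂) (h3 : ψ (φ y₂) = y₂)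
    (k0 : φ (ψ x₁) = x₁) (k1 : φ (ψ y₁) = y₁) (k2 : φ (ψ x₂) = x₂) (k3 : φ (ψ y₂) = y₂) :
    MulAut SurfaceGroup :=
  { toFun := φ, invFun := ψ,
    left_inv := hom_inv_ext φ ψ h0 h1 h2 h3,
    right_inv := hom_inv_ext ψ φ k0 k1 k2 k3,
    map_mul' := φ.map_mul }

@[simp] lemma mkAut_apply (φ ψ h0 h1 h2 h3 k0 k1 k2 k3) (x : SurfaceGroup) :
    (mkAut φ ψ h0 h1 h2 h3 k0 k1 k2 k3) x = φ x := rfl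
@[simp] lemma mkAut_inv_apply (φ ψ h0 h1 h2 h3 k0 k1 k2 k3) (x : SurfaceGroup) :
    (mkAut φ ψ h0 h1 h2 h3 k0 k1 k2 k3)⁻¹ x = ψ x := rfl

def f1 : Fin 4 → SurfaceGroup := ![x₁ * y₁, y₁, x₂, y₂]
def g1 : Fin 4 → SurfaceGroup := ![x₁ * y₁⁻¹, y₁, x₂, y₂]
def f2 : Fin 4 → SurfaceGroup := ![x₁, y₁ * x₁⁻¹, x₂, y₂]
def g2 : Fin 4 → SurfaceGroup := ![x₁, y₁ * x₁, x₂, y₂]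
def f3 : Fin 4 → SurfaceGroup := ![x₂⁻¹ * y₁ * x₁, y₁, x₂, x₂⁻¹ * y₁ * y₂]
def g3 : Fin 4 → SurfaceGroup := ![y₁⁻¹ * x₂ * x₁, y₁, x₂, y₁⁻¹ * x₂ * y₂]
def f4 : Fin 4 → SurfaceGroup := ![x₁, y₁, x₂ * y₂⁻¹, y₂]
def g4 : Fin 4 → SurfaceGroup := ![x₁, y₁, x₂ * y₂, y₂]
def f5 : Fin 4 → SurfaceGroup := ![x₁, y₁, x₂, y₂ * x₂⁻¹]
def g5 : Fin 4 → SurfaceGroup := ![x₁, y₁, x₂, y₂ * x₂]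

lemma hf1 : f1 0 * f1 1 * (f1 0)⁻¹ * (f1 1)⁻¹ * (f1 2 * f1 3 * (f1 2)⁻¹ * (f1 3)⁻¹) = 1 := by
  simp only [f1, Matrix.cons_val_zero, Matrix.cons_val_one, Matrix.head_cons,
    Matrix.cons_val_two, Matrix.tail_cons, Matrix.cons_val_three]
  rw [← surfRel']; group
lemma hg1 : g1 0 * g1 1 * (g1 0)⁻¹ * (g1 1)⁻¹ * (g1 2 * g1 3 * (g1 2)⁻¹ * (g1 3)⁻¹) = 1 := by
  simp only [g1, Matrix.cons_val_zero, Matrix.cons_val_one, Matrix.head_cons,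
    Matrix.cons_val_two, Matrix.tail_cons, Matrix.cons_val_three]
  rw [← surfRel']; group
lemma hf2 : f2 0 * f2 1 * (f2 0)⁻¹ * (f2 1)⁻¹ * (f2 2 * f2 3 * (f2 2)⁻¹ * (f2 3)⁻¹) = 1 := by
  simp only [f2, Matrix.cons_val_zero, Matrix.cons_val_one, Matrix.head_cons,
    Matrix.cons_val_two, Matrix.tail_cons, Matrix.cons_val_three]
  rw [← surfRel']; group
lemma hg2 : g2 0 * g2 1 * (g2 0)⁻¹ * (g2 1)⁻¹ * (g2 2 * g2 3 * (g2 2)⁻¹ * (g2 3)⁻¹) = 1 := by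
  simp only [g2, Matrix.cons_val_zero, Matrix.cons_val_one, Matrix.head_cons,
    Matrix.cons_val_two, Matrix.tail_cons, Matrix.cons_val_three]
  rw [← surfRel']; group
lemma hf3 : f3 0 * f3 1 * (f3 0)⁻¹ * (f3 1)⁻¹ * (f3 2 * f3 3 * (f3 2)⁻¹ * (f3 3)⁻¹) = 1 := by
  simp only [f3, Matrix.cons_val_zero, Matrix.cons_val_one, Matrix.head_cons,
    Matrix.cons_val_two, Matrix.tail_cons, Matrix.cons_val_three]
  have key : x₂⁻¹ * y₁ * x₁ * y₁ * (x₂⁻¹ * y₁ * x₁)⁻¹ * y₁⁻¹ *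
      (x₂ * (x₂⁻¹ * y₁ * y₂) * x₂⁻¹ * (x₂⁻¹ * y₁ * y₂)⁻¹) =
      (x₂⁻¹ * y₁) * (x₁ * y₁ * x₁⁻¹ * y₁⁻¹ * (x₂ * y₂ * x₂⁻¹ * y₂⁻¹)) * (x₂⁻¹ * y₁)⁻¹ := by
    group
  rw [key, surfRel']; group
lemma hg3 : g3 0 * g3 1 * (g3 0)⁻¹ * (g3 1)⁻¹ * (g3 2 * g3 3 * (g3 2)⁻¹ * (g3 3)⁻¹) = 1 := by
  simp only [g3, Matrix.cons_val_zero, Matrix.cons_val_one, Matrix.head_cons,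
    Matrix.cons_val_two, Matrix.tail_cons, Matrix.cons_val_three]
  have key : y₁⁻¹ * x₂ * x₁ * y₁ * (y₁⁻¹ * x₂ * x₁)⁻¹ * y₁⁻¹ *
      (x₂ * (y₁⁻¹ * x₂ * y₂) * x₂⁻¹ * (y₁⁻¹ * x₂ * y₂)⁻¹) =
      (y₁⁻¹ * x₂) * (x₁ * y₁ * x₁⁻¹ * y₁⁻¹ * (x₂ * y₂ * x₂⁻¹ * y₂⁻¹)) * (y₁⁻¹ * x₂)⁻¹ := by
    group
  rw [key, surfRel']; group
lemma hf4 : f4 0 * f4 1 * (f4 0)⁻¹ * (f4 1)⁻¹ * (f4 2 * f4 3 * (f4 2)⁻¹ * (f4 3)⁻¹) = 1 := by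
  simp only [f4, Matrix.cons_val_zero, Matrix.cons_val_one, Matrix.head_cons,
    Matrix.cons_val_two, Matrix.tail_cons, Matrix.cons_val_three]
  rw [← surfRel']; group
lemma hg4 : g4 0 * g4 1 * (g4 0)⁻¹ * (g4 1)⁻¹ * (g4 2 * g4 3 * (g4 2)⁻¹ * (g4 3)⁻¹) = 1 := by
  simp only [g4, Matrix.cons_val_zero, Matrix.cons_val_one, Matrix.head_cons,
    Matrix.cons_val_two, Matrix.tail_cons, Matrix.cons_val_three]
  rw [← surfRel']; group
lemma hf5 : f5 0 * f5 1 * (f5 0)⁻¹ * (f5 1)⁻¹ * (f5 2 * f5 3 * (f5 2)⁻¹ * (f5 3)⁻¹) = 1 := by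
  simp only [f5, Matrix.cons_val_zero, Matrix.cons_val_one, Matrix.head_cons,
    Matrix.cons_val_two, Matrix.tail_cons, Matrix.cons_val_three]
  rw [← surfRel']; group
lemma hg5 : g5 0 * g5 1 * (g5 0)⁻¹ * (g5 1)⁻¹ * (g5 2 * g5 3 * (g5 2)⁻¹ * (g5 3)⁻¹) = 1 := by
  simp only [g5, Matrix.cons_val_zero, Matrix.cons_val_one, Matrix.head_cons,
    Matrix.cons_val_two, Matrix.tail_cons, Matrix.cons_val_three]
  rw [← surfRel']; group

def σa : MulAut SurfaceGroup := mkAut (mkHom f1 hf1) (mkHom g1 hg1)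
  (by simp [f1, g1]) (by simp [f1, g1]) (by simp [f1, g1]) (by simp [f1, g1])
  (by simp [f1, g1]) (by simp [f1, g1]) (by simp [f1, g1]) (by simp [f1, g1])
def σb : MulAut SurfaceGroup := mkAut (mkHom f2 hf2) (mkHom g2 hg2)
  (by simp [f2, g2]) (by simp [f2, g2]) (by simp [f2, g2]) (by simp [f2, g2])
  (by simp [f2, g2]) (by simp [f2, g2]) (by simp [f2, g2]) (by simp [f2, g2])
def σc : MulAut SurfaceGroup := mkAut (mkHom f3 hf3) (mkHom g3 hg3)
  (by simp [f3, g3]; group) (by simp [f3, g3]) (by simp [f3, g3]) (by simp [f3, g3]; group)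
  (by simp [f3, g3]; group) (by simp [f3, g3]) (by simp [f3, g3]) (by simp [f3, g3]; group)
def σd : MulAut SurfaceGroup := mkAut (mkHom f4 hf4) (mkHom g4 hg4)
  (by simp [f4, g4]) (by simp [f4, g4]) (by simp [f4, g4]) (by simp [f4, g4])
  (by simp [f4, g4]) (by simp [f4, g4]) (by simp [f4, g4]) (by simp [f4, g4])
def σe : MulAut SurfaceGroup := mkAut (mkHom f5 hf5) (mkHom g5 hg5)
  (by simp [f5, g5]) (by simp [f5, g5]) (by simp [f5, g5]) (by simp [f5, g5])
  (by simp [f5, g5]) (by simp [f5, g5]) (by simp [f5, g5]) (by simp [f5, g5])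


/-- Each of the five assignments `σ₁, …, σ₅` on the generators of the genus-2 surface
group extends to an automorphism, and the inverse automorphisms act on the generators
as indicated. -/
theorem stmt9 :
    ∃ σ₁ σ₂ σ₃ σ₄ σ₅ : MulAut SurfaceGroup,
      (σ₁ x₁ = x₁ * y₁ ∧ σ₁ y₁ = y₁ ∧ σ₁ x₂ = x₂ ∧ σ₁ y₂ = y₂) ∧
      (σ₂ x₁ = x₁ ∧ σ₂ y₁ = y₁ * x₁⁻¹ ∧ σ₂ x₂ = x₂ ∧ σ₂ y₂ = y₂) ∧
      (σ₃ x₁ = x₂⁻¹ * y₁ * x₁ ∧ σ₃ y₁ = y₁ ∧ σ₃ x₂ = x₂ ∧ σ₃ y₂ = x₂⁻¹ * y₁ * y₂) ∧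
      (σ₄ x₁ = x₁ ∧ σ₄ y₁ = y₁ ∧ σ₄ x₂ = x₂ * y₂⁻¹ ∧ σ₄ y₂ = y₂) ∧
      (σ₅ x₁ = x₁ ∧ σ₅ y₁ = y₁ ∧ σ₅ x₂ = x₂ ∧ σ₅ y₂ = y₂ * x₂⁻¹) ∧
      (σ₁⁻¹ x₁ = x₁ * y₁⁻¹ ∧ σ₁⁻¹ y₁ = y₁ ∧ σ₁⁻¹ x₂ = x₂ ∧ σ₁⁻¹ y₂ = y₂) ∧
      (σ₂⁻¹ x₁ = x₁ ∧ σ₂⁻¹ y₁ = y₁ * x₁ ∧ σ₂⁻¹ x₂ = x₂ ∧ σ₂⁻¹ y₂ = y₂) ∧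
      (σ₃⁻¹ x₁ = y₁⁻¹ * x₂ * x₁ ∧ σ₃⁻¹ y₁ = y₁ ∧ σ₃⁻¹ x₂ = x₂ ∧
        σ₃⁻¹ y₂ = y₁⁻¹ * x₂ * y₂) ∧
      (σ₄⁻¹ x₁ = x₁ ∧ σ₄⁻¹ y₁ = y₁ ∧ σ₄⁻¹ x₂ = x₂ * y₂ ∧ σ₄⁻¹ y₂ = y₂) ∧
      (σ₅⁻¹ x₁ = x₁ ∧ σ₅⁻¹ y₁ = y₁ ∧ σ₅⁻¹ x₂ = x₂ ∧ σ₅⁻¹ y₂ = y₂ * x₂) := by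
  refine ⟨σa, σb, σc, σd, σe, ?_⟩
  simp [-MulAut.inv_apply, σa, σb, σc, σd, σe, f1, g1, f2, g2, f3, g3, f4, g4, f5, g5]
end

section
/- A finite group G contains two distinct elements of order two if and only if G contains a subgroup isomorphic to the dihedral group of order 2n for some n ≥ 2. -/
/-- A finite group contains two distinct elements of order two if and only if it
contains a subgroup isomorphic to a dihedral group of order `2n` for some `n ≥ 2`. -/
theorem stmt11 (G : Type) [Group G] [Finite G] :
    (∃ g h : G, g ≠ h ∧ orderOf g = 2 ∧ orderOf h = 2) ↔
      ∃ n : ℕ, 2 ≤ n ∧ ∃ H : Subgroup G, Nonempty (H ≃* DihedralGroup n) := by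
  constructor
  · rintro ⟨a, b, hab, ha, hb⟩
    set x := a * b with hxdef
    have ha1 : a ≠ 1 := by
      intro h; rw [h, orderOf_one] at ha; norm_num at ha
    have hb1 : b ≠ 1 := by
      intro h; rw [h, orderOf_one] at hb; norm_num at hb
    have haa : a * a = 1 := by
      have := pow_orderOf_eq_one a; rw [ha, sq] at this; exact this
    have hbb : b * b = 1 := by
      have := pow_orderOf_eq_one b; rw [hb, sq] at this; exact this
    have hainv : a⁻¹ = a := by rw [eq_comm, eq_inv_iff_mul_eq_one, haa]
    have hbinv : b⁻¹ = b := by rw [eq_comm, eq_inv_iff_mul_eq_one, hbb]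
    have hx1 : x ≠ 1 := by
      intro h
      apply hab
      have : a = b⁻¹ := eq_inv_of_mul_eq_one_left h
      rwa [hbinv] at this
    set n := orderOf x with hndef
    have hn0 : 0 < n := orderOf_pos x
    have hne1 : n ≠ 1 := by
      intro h
      exact hx1 (orderOf_eq_one_iff.mp h)
    have hn2 : 2 ≤ n := by omega
    haveI : NeZero n := ⟨hn0.ne'⟩
    have hxn : x ^ n = 1 := pow_orderOf_eq_one x
    have key : ∀ k : ℕ, a * x ^ k * a = (x ^ k)⁻¹ := by
      intro k
      have h1 : a * x * a⁻¹ = x⁻¹ := by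
        rw [hainv, hxdef]
        rw [show a * (a * b) * a = (a * a) * (b * a) by group, haa, one_mul,
          mul_inv_rev, hainv, hbinv]
      calc a * x ^ k * a = (a * x * a⁻¹) ^ k := by rw [conj_pow, hainv]
        _ = (x⁻¹) ^ k := by rw [h1]
        _ = (x ^ k)⁻¹ := by rw [inv_pow]
    set χ : ZMod n → G := fun i => x ^ i.val with hχdef
    have hχadd : ∀ i j : ZMod n, χ (i + j) = χ i * χ j := by
      intro i j
      simp only [hχdef]
      rw [ZMod.val_add, ← pow_add, pow_mod_orderOf]
    have hχzero : χ 0 = 1 := by simp [hχdef]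
    have hχneg : ∀ i : ZMod n, χ (-i) = (χ i)⁻¹ := by
      intro i
      have : χ (-i) * χ i = 1 := by rw [← hχadd, neg_add_cancel, hχzero]
      exact eq_inv_of_mul_eq_one_left this
    have hkey : ∀ i : ZMod n, a * χ i * a = χ (-i) := by
      intro i; rw [hχneg]; exact key i.val
    have hcomm : ∀ i : ZMod n, χ i * a = a * χ (-i) := by
      intro i
      rw [← hkey i]
      rw [show a * (a * χ i * a) = (a * a) * χ i * a by group, haa, one_mul]
    have hχinj : Function.Injective χ := by
      intro i j h
      simp only [hχdef] at h
      have := pow_eq_pow_iff_modEq.mp h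
      rw [← hndef] at this
      have h2 : i.val % n = j.val % n := this
      rw [Nat.mod_eq_of_lt (ZMod.val_lt i), Nat.mod_eq_of_lt (ZMod.val_lt j)] at h2
      exact ZMod.val_injective n h2
    have haχ : ∀ i : ZMod n, a ≠ χ i := by
      intro i h
      have hcom : a * x = x * a := by
        simp only [hχdef] at h
        rw [h, ← pow_succ', ← pow_succ]
      have hx2 : x ^ 2 = 1 := by
        have h1 : a * x * a = x⁻¹ := by simpa using key 1
        rw [hcom, mul_assoc, haa, mul_one] at h1
        rw [sq]
        nth_rewrite 2 [h1]
        exact mul_inv_cancel x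
      have hdvd : n ∣ 2 := orderOf_dvd_of_pow_eq_one hx2
      have hn2' : n = 2 := by
        have := Nat.le_of_dvd two_pos hdvd
        omega
      have hval : i.val < 2 := hn2' ▸ ZMod.val_lt i
      simp only [hχdef] at h
      interval_cases hv : i.val
      · rw [pow_zero] at h; exact ha1 h
      · rw [pow_one] at h
        apply hb1
        have : a * a = a * (a * b) := by rw [← hxdef, ← h]
        rw [haa, ← mul_assoc, haa, one_mul] at this
        exact this.symm
    let fn : DihedralGroup n → G := fun g => match g with
      | .r i => χ i
      | .sr i => a * χ i
    have hfmul : ∀ g1 g2, fn (g1 * g2) = fn g1 * fn g2 := by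
      rintro (i | i) (j | j)
      · show χ (i + j) = χ i * χ j
        exact hχadd i j
      · show a * χ (j - i) = χ i * (a * χ j)
        rw [← mul_assoc, hcomm i, mul_assoc, ← hχadd, neg_add_eq_sub]
      · show a * χ (i + j) = a * χ i * χ j
        rw [mul_assoc, hχadd]
      · show χ (j - i) = a * χ i * (a * χ j)
        rw [show a * χ i * (a * χ j) = a * χ i * a * χ j by group, hkey, ← hχadd,
          neg_add_eq_sub]
    let f : DihedralGroup n →* G := MonoidHom.mk' fn hfmul
    have hinj : Function.Injective f := by
      rw [injective_iff_map_eq_one]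
      rintro (i | i) h
      · have : χ i = χ 0 := by rw [hχzero]; exact h
        rw [hχinj this]
        rfl
      · exfalso
        have : a = (χ i)⁻¹ := eq_inv_of_mul_eq_one_left h
        rw [← hχneg] at this
        exact haχ _ this
    exact ⟨n, hn2, f.range, ⟨(MonoidHom.ofInjective hinj).symm⟩⟩
  · rintro ⟨n, hn, H, ⟨e⟩⟩
    haveI : Fact (1 < n) := ⟨hn⟩
    refine ⟨(e.symm (.sr 0) : H), (e.symm (.sr 1) : H), ?_, ?_, ?_⟩
    · intro h
      have : (DihedralGroup.sr 0 : DihedralGroup n) = .sr 1 := by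
        apply e.symm.injective.eq_iff.mp
        exact Subtype.coe_injective h
      simp only [DihedralGroup.sr.injEq] at this
      exact zero_ne_one this
    · exact (Subgroup.orderOf_coe _).trans
        ((orderOf_injective e.symm.toMonoidHom e.symm.injective _).trans
          (DihedralGroup.orderOf_sr _))
    · exact (Subgroup.orderOf_coe _).trans
        ((orderOf_injective e.symm.toMonoidHom e.symm.injective _).trans
          (DihedralGroup.orderOf_sr _))
end

section
/- Let F be the genus-2 surface group with generators x1, y1, x2, y2, let G be a finite group of odd order, and let θ : F → G be a surjective group homomorphism with [x1,y1] ∉ ker(θ). Let N be the intersection, over all φ ∈ Aut(F), of the images φ(ker θ). Then: (i) N is a normal subgroup of F of finite index that is invariant under every automorphism of F; (ii) the quotient group G_N = F/N is a finite group of odd order; and (iii) for every φ ∈ Aut(F), the element φ([x1,y1]) does not lie in N. -/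
open scoped commutatorElement

-- homs from SurfaceGroup to a finite group form a finite type
instance finiteHom (G : Type) [Group G] [Finite G] : Finite (SurfaceGroup →* G) := by
  have h1 : Finite (FreeGroup (Fin 4) →* G) := Finite.of_equiv _ FreeGroup.lift
  have hmk : Function.Surjective (QuotientGroup.mk' (Subgroup.normalClosure surfaceRels)) :=
    QuotientGroup.mk'_surjective _
  exact Finite.of_injective
    (fun f : SurfaceGroup →* G => f.comp (QuotientGroup.mk' (Subgroup.normalClosure surfaceRels)))
    (fun f g h => MonoidHom.ext fun x => by
      obtain ⟨y, rfl⟩ := hmk x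
      exact DFunLike.congr_fun h y)

/-- Let `θ` be a surjective homomorphism from the genus-2 surface group `F` onto a finite
group `G` of odd order with `[x₁,y₁] ∉ ker θ`, and let `N = ⋂_{φ ∈ Aut F} φ(ker θ)`.
Then (i) `N` is a finite-index normal subgroup of `F` invariant under every automorphism
of `F`; (ii) the quotient `F/N` is a finite group of odd order; and (iii) for every
automorphism `φ` of `F`, the element `φ([x₁,y₁])` does not lie in `N`. -/
theorem stmt12 (G : Type) [Group G] [Finite G] (hodd : Odd (Nat.card G))
    (θ : SurfaceGroup →* G) (hsurj : Function.Surjective θ)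
    (hker : ⁅x₁, y₁⁆ ∉ θ.ker)
    (N : Subgroup SurfaceGroup)
    (hN : N = ⨅ φ : MulAut SurfaceGroup, Subgroup.map φ.toMonoidHom θ.ker) :
    (N.Normal ∧ N.FiniteIndex ∧
      ∀ φ : MulAut SurfaceGroup, Subgroup.map φ.toMonoidHom N = N) ∧
    (Finite (SurfaceGroup ⧸ N) ∧ Odd (Nat.card (SurfaceGroup ⧸ N))) ∧
    (∀ φ : MulAut SurfaceGroup, φ ⁅x₁, y₁⁆ ∉ N) := by
  -- composition of maps under automorphisms
  have hmapmap : ∀ (ψ χ : MulAut SurfaceGroup) (K : Subgroup SurfaceGroup),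
      Subgroup.map ψ.toMonoidHom (Subgroup.map χ.toMonoidHom K)
        = Subgroup.map (ψ * χ).toMonoidHom K := by
    intro ψ χ K
    rw [Subgroup.map_map]
    rfl
  have hNle : ∀ φ : MulAut SurfaceGroup, N ≤ Subgroup.map φ.toMonoidHom θ.ker := by
    intro φ; rw [hN]; exact iInf_le _ φ
  -- invariance
  have hinv_le : ∀ ψ : MulAut SurfaceGroup, Subgroup.map ψ.toMonoidHom N ≤ N := by
    intro ψ
    conv_rhs => rw [hN]
    refine le_iInf fun φ => ?_
    calc Subgroup.map ψ.toMonoidHom N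
        ≤ Subgroup.map ψ.toMonoidHom (Subgroup.map (ψ⁻¹ * φ).toMonoidHom θ.ker) :=
          Subgroup.map_mono (hNle _)
      _ = Subgroup.map (ψ * (ψ⁻¹ * φ)).toMonoidHom θ.ker := hmapmap _ _ _
      _ = Subgroup.map φ.toMonoidHom θ.ker := by rw [mul_inv_cancel_left]
  have hinv : ∀ ψ : MulAut SurfaceGroup, Subgroup.map ψ.toMonoidHom N = N := by
    intro ψ
    refine le_antisymm (hinv_le ψ) fun x hx => ?_
    exact ⟨ψ⁻¹ x, hinv_le ψ⁻¹ ⟨x, hx, rfl⟩, by simp⟩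
  -- normality
  have hnormal : N.Normal := by
    constructor
    intro n hn g
    have := hinv (MulAut.conj g)
    rw [← this]
    exact ⟨n, hn, by simp [MulAut.conj_apply]⟩
  -- kernel description: map φ ker θ = ker (θ ∘ φ⁻¹)
  set e : MulAut SurfaceGroup → (SurfaceGroup →* G) :=
    fun φ => θ.comp φ.symm.toMonoidHom with he
  have hmapker : ∀ φ : MulAut SurfaceGroup,
      Subgroup.map φ.toMonoidHom θ.ker = (e φ).ker := by
    intro φ
    ext x
    simp only [Subgroup.mem_map, MonoidHom.mem_ker, he, MonoidHom.comp_apply,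
      MulEquiv.coe_toMonoidHom]
    constructor
    · rintro ⟨k, hk, rfl⟩; simpa using hk
    · intro hx; exact ⟨φ.symm x, hx, by simp⟩
  -- the pi homomorphism over the (finite) range of e
  set π : SurfaceGroup →* (Set.range e → G) :=
    Pi.monoidHom (fun f => (f : SurfaceGroup →* G)) with hπ
  have hNker : N = π.ker := by
    ext x
    rw [hN]
    simp only [Subgroup.mem_iInf, MonoidHom.mem_ker, hπ]
    constructor
    · intro h
      funext f
      obtain ⟨f, ⟨φ, rfl⟩⟩ := f
      have := h φ
      rw [hmapker] at this
      exact this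
    · intro h φ
      rw [hmapker]
      have := congrFun h ⟨e φ, φ, rfl⟩
      exact this
  have hfin : Finite (SurfaceGroup ⧸ N) := by
    rw [hNker]
    exact Finite.of_injective _ (QuotientGroup.kerLift_injective π)
  have hindex : N.FiniteIndex := @Subgroup.finiteIndex_of_finite_quotient _ _ N hfin
  have hodd' : Odd (Nat.card (SurfaceGroup ⧸ N)) := by
    have hdvd : Nat.card (SurfaceGroup ⧸ N) ∣ Nat.card (Set.range e → G) := by
      rw [hNker]
      exact Subgroup.card_dvd_of_injective _ (QuotientGroup.kerLift_injective π)
    have hoddpow : Odd (Nat.card (Set.range e → G)) := by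
      rw [Nat.card_fun]
      exact hodd.pow
    rw [Nat.odd_iff] at hoddpow ⊢
    rcases Nat.mod_two_eq_zero_or_one (Nat.card (SurfaceGroup ⧸ N)) with h | h
    · exfalso
      have : 2 ∣ Nat.card (Set.range e → G) :=
        dvd_trans (Nat.dvd_of_mod_eq_zero h) hdvd
      omega
    · exact h
  refine ⟨⟨hnormal, hindex, hinv⟩, ⟨hfin, hodd'⟩, ?_⟩
  intro φ hmem
  have := hNle φ hmem
  obtain ⟨k, hk, hkx⟩ := this
  have : k = ⁅x₁, y₁⁆ := φ.injective hkx
  exact hker (this ▸ hk)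
end
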